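/- Let η := 19/20. Let W_η : (Fin 2 × Fin 2) → Fin 3 → ℝ be the channel with W_η(1+x₂ | (1,x₂)) = η and W_η(0 | (1,x₂)) = 1−η (other entries of those rows zero), and W_η(· | (0,x₂)) = (1 − η/2, η/4, η/4) for both x₂. Let P be the prior P(x₁,x₂) := π(x₁)·(1/2) with π(1) = 15/17 and π(0) = 2/17, and let Q(x,y) := P(x)·W_η(y|x). Then the mutual information of Q satisfies I(Q) < 1. -/

import Mathlib

open Finset

/-- The detector efficiency η = 95%. -/
noncomputable def eta : ℝ := 19 / 20

/-- The two-sender unassisted single-particle channel with detector efficiency η: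
clicks are lost independently with probability 1−η and registered as the vacuum outcome 0. -/
noncomputable def Weta : Fin 2 × Fin 2 → Fin 3 → ℝ := fun x y =>
  if x.1 = 1 then
    (if (y : ℕ) = 1 + (x.2 : ℕ) then eta else if y = 0 then 1 - eta else 0)
  else
    (if y = 0 then 1 - eta / 2 else eta / 4)

/-- The prior `P(x₁,x₂) = π(x₁)·(1/2)` with `π(1) = 15/17`, `π(0) = 2/17`. -/
noncomputable def P : Fin 2 × Fin 2 → ℝ := fun x =>
  (if x.1 = 1 then (15 : ℝ) / 17 else 2 / 17) * (1 / 2)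

/-- The joint distribution `Q(x,y) = P(x)·W_η(y|x)`. -/
noncomputable def Q : Fin 2 × Fin 2 → Fin 3 → ℝ := fun x y => P x * Weta x y

/-- At detector efficiency η = 95% the quantum rate-sum advantage disappears:
the mutual information drops below the classical bound of 1 bit. -/
theorem detection_loophole_kills_advantage :
    ∑ x : Fin 2 × Fin 2, ∑ y : Fin 3,
      Q x y * Real.logb 2 (Q x y / ((∑ y', Q x y') * (∑ x', Q x' y))) < 1 := by
  simp only [Fintype.sum_prod_type, Fin.sum_univ_succ, Fin.sum_univ_zero]
  norm_num [Q, P, Weta, eta, Fin.ext_iff]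
  have h2 : (0:ℝ) < Real.log 2 := Real.log_pos (by norm_num)
  have key : 340 * Real.log 17 + 21 * Real.log 7 < 51 * Real.log 3 + 1383 * Real.log 2 := by
    have hlt : ((17:ℝ)^340 * 7^21) < (3^51 * 2^1383) := by
      exact_mod_cast (show (17:ℕ)^340 * 7^21 < 3^51 * 2^1383 by decide +kernel)
    have := Real.log_lt_log (by positivity) hlt
    rw [Real.log_mul (by positivity) (by positivity),
        Real.log_mul (by positivity) (by positivity),
        Real.log_pow, Real.log_pow, Real.log_pow, Real.log_pow] at this
    push_cast at this
    linarith
  have l1 : Real.logb 2 (119/24) =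
      (Real.log 7 + Real.log 17 - (3*Real.log 2 + Real.log 3)) / Real.log 2 := by
    rw [Real.logb, show (119:ℝ)/24 = 7*17/(2^3*3) by norm_num,
        Real.log_div (by positivity) (by positivity),
        Real.log_mul (by positivity) (by positivity),
        Real.log_mul (by positivity) (by positivity), Real.log_pow]
    push_cast; ring
  have l2 : Real.logb 2 (17/32) = (Real.log 17 - 5*Real.log 2) / Real.log 2 := by
    rw [Real.logb, show (17:ℝ)/32 = 17/2^5 by norm_num,
        Real.log_div (by positivity) (by positivity), Real.log_pow]
    push_cast; ring
  have l3 : Real.logb 2 (17/36) =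
      (Real.log 17 - (2*Real.log 2 + 2*Real.log 3)) / Real.log 2 := by
    rw [Real.logb, show (17:ℝ)/36 = 17/(2^2*3^2) by norm_num,
        Real.log_div (by positivity) (by positivity),
        Real.log_mul (by positivity) (by positivity), Real.log_pow, Real.log_pow]
    push_cast; ring
  have l4 : Real.logb 2 (17/8) = (Real.log 17 - 3*Real.log 2) / Real.log 2 := by
    rw [Real.logb, show (17:ℝ)/8 = 17/2^3 by norm_num,
        Real.log_div (by positivity) (by positivity), Real.log_pow]
    push_cast; ring
  rw [l1, l2, l3, l4]
  have expand : 21 / 680 * ((Real.log 7 + Real.log 17 - (3 * Real.log 2 + Real.log 3)) / Real.log 2) +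
          (19 / 1360 * ((Real.log 17 - 5 * Real.log 2) / Real.log 2) +
            19 / 1360 * ((Real.log 17 - 5 * Real.log 2) / Real.log 2)) +
        (21 / 680 * ((Real.log 7 + Real.log 17 - (3 * Real.log 2 + Real.log 3)) / Real.log 2) +
          (19 / 1360 * ((Real.log 17 - 5 * Real.log 2) / Real.log 2) +
            19 / 1360 * ((Real.log 17 - 5 * Real.log 2) / Real.log 2))) +
      (3 / 136 * ((Real.log 17 - (2 * Real.log 2 + 2 * Real.log 3)) / Real.log 2) +
          57 / 136 * ((Real.log 17 - 3 * Real.log 2) / Real.log 2) +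
        (3 / 136 * ((Real.log 17 - (2 * Real.log 2 + 2 * Real.log 3)) / Real.log 2) +
          57 / 136 * ((Real.log 17 - 3 * Real.log 2) / Real.log 2)))
      = (340 * Real.log 17 + 21 * Real.log 7 - 51 * Real.log 3 - 1043 * Real.log 2) / (340 * Real.log 2) := by
    field_simp
    ring
  rw [expand, div_lt_one (by positivity)]
  linarith
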